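/- Let m, M be integers with 0 ≤ m and 2m ≤ M, and let F be a forest with |F| ≥ M + 1. Then there exists a vertex s of F and a partition of F minus s into parts F_1, F_2, F_3 such that m ≤ |F_3| ≤ M, |F_1| ≤ |F| − 1 − M, and |F_2| ≤ |F_1|. -/

import Mathlib

open Finset SimpleGraph
open scoped Classical

set_option linter.unusedSectionVars false

variable {V : Type} [Fintype V] [DecidableEq V]

namespace SepLemma

/-- The graph `F` with vertex `s` isolated (all edges at `s` removed). -/
def del (F : SimpleGraph V) (s : V) : SimpleGraph V where
  Adj a b := F.Adj a b ∧ a ≠ s ∧ b ≠ s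
  symm := ⟨fun _ _ ⟨h, ha, hb⟩ => ⟨h.symm, hb, ha⟩⟩
  loopless := ⟨fun a ⟨h, _, _⟩ => F.irrefl (v := a) h⟩

lemma del_adj {F : SimpleGraph V} {s a b : V} :
    (del F s).Adj a b ↔ F.Adj a b ∧ a ≠ s ∧ b ≠ s := Iff.rfl

noncomputable def cmp (F : SimpleGraph V) (s w : V) : Finset V :=
  univ.filter fun x => (del F s).Reachable w x

lemma mem_cmp {F : SimpleGraph V} {s w x : V} :
    x ∈ cmp F s w ↔ (del F s).Reachable w x := by simp [cmp]

lemma self_mem_cmp {F : SimpleGraph V} {s w : V} : w ∈ cmp F s w :=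
  mem_cmp.mpr (Reachable.refl w)

lemma walk_start_eq {F : SimpleGraph V} {s x : V} (p : (del F s).Walk s x) : s = x := by
  cases p with
  | nil => rfl
  | cons h _ => exact absurd rfl h.2.1

lemma s_not_mem_cmp {F : SimpleGraph V} {s w : V} (h : w ≠ s) : s ∉ cmp F s w := by
  intro hs
  obtain ⟨p⟩ := (mem_cmp.mp hs).symm
  exact h (walk_start_eq p).symm

lemma cmp_eq_of_reach {F : SimpleGraph V} {s w x : V} (h : (del F s).Reachable w x) :
    cmp F s w = cmp F s x := by
  ext y; simp only [mem_cmp]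
  exact ⟨fun hy => h.symm.trans hy, fun hy => h.trans hy⟩

lemma cmp_eq_of_mem {F : SimpleGraph V} {s w x : V} (h : x ∈ cmp F s w) :
    cmp F s x = cmp F s w := (cmp_eq_of_reach (mem_cmp.mp h)).symm

lemma cmp_closed {F : SimpleGraph V} {s w a b : V} (ha : a ∈ cmp F s w)
    (hab : (del F s).Adj a b) : b ∈ cmp F s w :=
  mem_cmp.mpr ((mem_cmp.mp ha).trans hab.reachable)

lemma cmp_disj {F : SimpleGraph V} {s w x : V} (h : cmp F s w ≠ cmp F s x) :
    Disjoint (cmp F s w) (cmp F s x) := by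
  rw [Finset.disjoint_left]
  intro y hyw hyx
  exact h ((cmp_eq_of_mem hyw).symm.trans (cmp_eq_of_mem hyx))

/-- `D∖{v}` is closed under edges of `F` (only `v` may connect it to the rest). -/
def IsPair (F : SimpleGraph V) (v : V) (D : Finset V) : Prop :=
  v ∈ D ∧ ∀ ⦃a b : V⦄, F.Adj a b → a ∈ D.erase v → b ∈ D

lemma pair_univ (F : SimpleGraph V) (v : V) : IsPair F v univ :=
  ⟨mem_univ v, fun _ _ _ _ => mem_univ _⟩

lemma reach_stay {F : SimpleGraph V} {v : V} {D : Finset V} (hp : IsPair F v D) :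
    ∀ {a x : V}, (del F v).Reachable a x → a ∈ D.erase v → x ∈ D.erase v := by
  have H : ∀ (a x : V) (p : (del F v).Walk a x), a ∈ D.erase v → x ∈ D.erase v := by
    intro a x p
    induction p with
    | nil => exact id
    | cons h q ih =>
      intro ha
      exact ih (Finset.mem_erase.mpr ⟨h.2.2, hp.2 h.1 ha⟩)
  intro a x hr ha
  obtain ⟨p⟩ := hr
  exact H _ _ p ha

lemma cmp_subset_of_pair {F : SimpleGraph V} {v : V} {D : Finset V} (hp : IsPair F v D)
    {w : V} (hw : w ∈ D.erase v) : cmp F v w ⊆ D.erase v := by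
  intro x hx
  exact reach_stay hp (mem_cmp.mp hx) hw

lemma closed_outside {F : SimpleGraph V} {v : V} {D : Finset V} (hp : IsPair F v D)
    {a b : V} (ha : a ∉ D) (hab : (del F v).Adj a b) : b ∉ D := by
  intro hb
  exact ha (hp.2 hab.1.symm (Finset.mem_erase.mpr ⟨hab.2.2, hb⟩))

lemma not_mem_support {F : SimpleGraph V} {v : V} :
    ∀ {a x : V} (p : (del F v).Walk a x), a ≠ v → v ∉ p.support := by
  intro a x p
  induction p with
  | nil => intro ha; simp [Walk.support_nil, Ne.symm ha]
  | cons h q ih =>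
    intro ha
    simp only [Walk.support_cons, List.mem_cons]
    push_neg
    exact ⟨Ne.symm ha, ih h.2.2⟩

lemma lift_walk {F : SimpleGraph V} {v : V} {a x : V} (p : (del F v).Walk a x) :
    ∃ q : F.Walk a x, q.support = p.support := by
  induction p with
  | nil => exact ⟨Walk.nil, rfl⟩
  | cons h q ih =>
    obtain ⟨q', hq'⟩ := ih
    exact ⟨Walk.cons h.1 q', by simp [Walk.support_cons, hq']⟩

lemma uniq_nbr {F : SimpleGraph V} (hF : F.IsAcyclic) {v a a' : V}
    (h1 : F.Adj v a) (h2 : F.Adj v a') (hr : (del F v).Reachable a a') : a = a' := by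
  obtain ⟨p⟩ := hr
  have hav : a ≠ v := fun h => F.irrefl (v := v) (h ▸ h1)
  have hvp : v ∉ p.support := not_mem_support p hav
  obtain ⟨q, hq⟩ := lift_walk p
  set pb := q.bypass with hpb
  have hpbP : pb.IsPath := Walk.bypass_isPath q
  have hvq : v ∉ pb.support := fun hmem => hvp (hq ▸ (Walk.support_bypass_subset q hmem))
  have hP2 : (Walk.cons h1 pb).IsPath := hpbP.cons hvq
  have hP1 : (Walk.cons h2 (Walk.nil : F.Walk a' a')).IsPath :=
    Walk.IsPath.nil.cons (by simp [Walk.support_nil, h2.ne])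
  have hPP := isAcyclic_iff_path_unique.mp hF
    ⟨Walk.cons h2 Walk.nil, hP1⟩ ⟨Walk.cons h1 pb, hP2⟩
  have hsupp : (Walk.cons h2 (Walk.nil : F.Walk a' a')).support
      = (Walk.cons h1 pb).support := congrArg Walk.support (Subtype.ext_iff.mp hPP)
  simp only [Walk.support_cons, Walk.support_nil] at hsupp
  injection hsupp with _ htail
  have h3 := Walk.support_eq_cons pb
  rw [← htail] at h3
  injection h3 with h4 _
  exact h4.symm

lemma pair_of_cmp {F : SimpleGraph V} (hF : F.IsAcyclic) {v : V} {D : Finset V}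
    (hp : IsPair F v D) {w : V} (hw : w ∈ D.erase v) :
    ∃ w' ∈ cmp F v w, IsPair F w' (cmp F v w) := by
  have hvW : v ∉ cmp F v w := s_not_mem_cmp (Finset.mem_erase.mp hw).1
  by_cases hex : ∃ a ∈ cmp F v w, F.Adj v a
  · obtain ⟨a, haW, hva⟩ := hex
    refine ⟨a, haW, haW, ?_⟩
    intro x y hxy hx
    have hxW : x ∈ cmp F v w := Finset.mem_of_mem_erase hx
    by_cases hyv : y = v
    · subst hyv
      have hxa : x = a := uniq_nbr hF hxy.symm hva
        ((mem_cmp.mp hxW).symm.trans (mem_cmp.mp haW))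
      exact absurd hxa (Finset.mem_erase.mp hx).1
    · have hxv : x ≠ v := fun h => hvW (h ▸ hxW)
      exact cmp_closed hxW ⟨hxy, hxv, hyv⟩
  · refine ⟨w, self_mem_cmp, self_mem_cmp, ?_⟩
    intro x y hxy hx
    have hxW : x ∈ cmp F v w := Finset.mem_of_mem_erase hx
    by_cases hyv : y = v
    · exact absurd ⟨x, hxW, hyv ▸ hxy.symm⟩ hex
    · have hxv : x ≠ v := fun h => hvW (h ▸ hxW)
      exact cmp_closed hxW ⟨hxy, hxv, hyv⟩

lemma exists_minpair {F : SimpleGraph V} (hF : F.IsAcyclic) (θ : ℕ) (v₀ : V) (D₀ : Finset V)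
    (h₀ : IsPair F v₀ D₀) (hθ : θ ≤ D₀.card) :
    ∃ v D, IsPair F v D ∧ D ⊆ D₀ ∧ θ ≤ D.card ∧
      ∀ w ∈ D.erase v, (cmp F v w).card < θ := by
  set P : Finset (V × Finset V) :=
    univ.filter (fun p => IsPair F p.1 p.2 ∧ p.2 ⊆ D₀ ∧ θ ≤ p.2.card) with hP
  have hPne : P.Nonempty :=
    ⟨(v₀, D₀), Finset.mem_filter.mpr ⟨Finset.mem_univ _, h₀, Finset.Subset.refl _, hθ⟩⟩
  obtain ⟨p, hpP, hpmin⟩ := Finset.exists_min_image P (fun p => p.2.card) hPne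
  obtain ⟨hpair, hsub, hcard⟩ := (Finset.mem_filter.mp hpP).2
  refine ⟨p.1, p.2, hpair, hsub, hcard, ?_⟩
  intro w hw
  by_contra hc
  push_neg at hc
  obtain ⟨w', _, hpair'⟩ := pair_of_cmp hF hpair hw
  have hWsub : cmp F p.1 w ⊆ p.2.erase p.1 := cmp_subset_of_pair hpair hw
  have hmem : (w', cmp F p.1 w) ∈ P := by
    refine Finset.mem_filter.mpr ⟨Finset.mem_univ _, hpair', ?_, hc⟩
    exact hWsub.trans ((Finset.erase_subset _ _).trans hsub)
  have hmin : p.2.card ≤ (cmp F p.1 w).card := hpmin _ hmem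
  have hlt : (cmp F p.1 w).card < p.2.card :=
    lt_of_le_of_lt (Finset.card_le_card hWsub) (Finset.card_erase_lt_of_mem hpair.1)
  omega

lemma exists_maxsub (S : Finset (Finset V)) (cap : ℕ) (hne : ∀ X ∈ S, X.Nonempty) :
    ∃ T ⊆ S, (∑ X ∈ T, X.card) ≤ cap ∧
      ∀ X ∈ S, X ∉ T → cap < (∑ X ∈ T, X.card) + X.card := by
  obtain ⟨T, hT, hmax⟩ := Finset.exists_max_image
    (S.powerset.filter fun T => (∑ X ∈ T, X.card) ≤ cap)
    (fun T => ∑ X ∈ T, X.card) ⟨∅, by simp⟩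
  obtain ⟨hTS, hTcap⟩ := Finset.mem_filter.mp hT
  refine ⟨T, Finset.mem_powerset.mp hTS, hTcap, ?_⟩
  intro X hX hXT
  by_contra hc
  push_neg at hc
  have hins : insert X T ∈ S.powerset.filter fun T => (∑ X ∈ T, X.card) ≤ cap :=
    Finset.mem_filter.mpr
      ⟨Finset.mem_powerset.mpr (Finset.insert_subset hX (Finset.mem_powerset.mp hTS)), by
        rwa [Finset.sum_insert hXT, add_comm]⟩
  have hle : (∑ Y ∈ insert X T, Y.card) ≤ ∑ Y ∈ T, Y.card := hmax _ hins
  rw [Finset.sum_insert hXT] at hle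
  have hpos : 0 < X.card := Finset.card_pos.mpr (hne X hX)
  omega

def Closed (F : SimpleGraph V) (s : V) (X : Finset V) : Prop :=
  ∀ ⦃a⦄, a ∈ X → ∀ ⦃b⦄, (del F s).Adj a b → b ∈ X

lemma card_B {s : V} {C A : Finset V} (hCs : C ⊆ univ.erase s) (hAs : A ⊆ univ.erase s)
    (hCA : Disjoint C A) :
    (((univ.erase s) \ C) \ A).card + C.card + A.card = Fintype.card V - 1 := by
  have h2 : A ⊆ (univ.erase s) \ C := fun a ha =>
    Finset.mem_sdiff.mpr ⟨hAs ha, Finset.disjoint_right.mp hCA ha⟩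
  have h1 : ((univ.erase s) \ C).card = (univ.erase s).card - C.card := Finset.card_sdiff_of_subset hCs
  have h3 : (((univ.erase s) \ C) \ A).card = ((univ.erase s) \ C).card - A.card :=
    Finset.card_sdiff_of_subset h2
  have h4 : (univ.erase s).card = Fintype.card V - 1 := by
    rw [Finset.card_erase_of_mem (mem_univ s), Finset.card_univ]
  have hC : C.card ≤ (univ.erase s).card := Finset.card_le_card hCs
  have hA2 : A.card ≤ ((univ.erase s) \ C).card := Finset.card_le_card h2
  have h5 : 1 ≤ Fintype.card V := Fintype.card_pos_iff.mpr ⟨s⟩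
  omega

lemma assemble {F : SimpleGraph V} {m M : ℕ} (hcard : M + 1 ≤ Fintype.card V)
    (s : V) (C A : Finset V) (hCc : Closed F s C) (hAc : Closed F s A)
    (hCs : C ⊆ univ.erase s) (hAs : A ⊆ univ.erase s) (hCA : Disjoint C A)
    (hm : m ≤ C.card) (hM : C.card ≤ M)
    (hA : A.card + M + 1 ≤ Fintype.card V)
    (hB : (((univ.erase s) \ C) \ A).card + M + 1 ≤ Fintype.card V) :
    ∃ (s' : V) (F1 F2 F3 : Finset V),
      Disjoint F1 F2 ∧ Disjoint F1 F3 ∧ Disjoint F2 F3 ∧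
      F1 ∪ F2 ∪ F3 = Finset.univ.erase s' ∧
      (∀ u w : V, F.Adj u w →
        ¬(u ∈ F1 ∧ w ∈ F2) ∧ ¬(u ∈ F1 ∧ w ∈ F3) ∧ ¬(u ∈ F2 ∧ w ∈ F3)) ∧
      m ≤ F3.card ∧ F3.card ≤ M ∧
      F1.card ≤ Fintype.card V - 1 - M ∧
      F2.card ≤ F1.card := by
  classical
  set B := ((univ.erase s) \ C) \ A with hBdef
  have hBsub : B ⊆ univ.erase s := fun x hx =>
    (Finset.mem_sdiff.mp (Finset.mem_sdiff.mp hx).1).1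
  have hBC : Disjoint B C := by
    rw [Finset.disjoint_left]
    intro x hx
    exact (Finset.mem_sdiff.mp (Finset.mem_sdiff.mp hx).1).2
  have hBA : Disjoint B A := by
    rw [Finset.disjoint_left]
    intro x hx
    exact (Finset.mem_sdiff.mp hx).2
  have hBc : Closed F s B := by
    intro a ha b hab
    have haC : a ∉ C := Finset.disjoint_left.mp hBC ha
    have haA : a ∉ A := Finset.disjoint_left.mp hBA ha
    refine Finset.mem_sdiff.mpr ⟨Finset.mem_sdiff.mpr
      ⟨Finset.mem_erase.mpr ⟨hab.2.2, Finset.mem_univ b⟩, ?_⟩, ?_⟩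
    · exact fun hbC => haC (hCc hbC hab.symm)
    · exact fun hbA => haA (hAc hbA hab.symm)
  have hmem_iff : ∀ x, x ∈ univ.erase s ↔ (x ∈ C ∨ x ∈ A ∨ x ∈ B) := by
    intro x
    constructor
    · intro hx
      by_cases h1 : x ∈ C
      · exact Or.inl h1
      by_cases h2 : x ∈ A
      · exact Or.inr (Or.inl h2)
      refine Or.inr (Or.inr ?_)
      exact Finset.mem_sdiff.mpr ⟨Finset.mem_sdiff.mpr ⟨hx, h1⟩, h2⟩
    · rintro (h | h | h)
      exacts [hCs h, hAs h, hBsub h]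
  have hedge : ∀ (X Y : Finset V), Closed F s X → Disjoint X Y → X ⊆ univ.erase s →
      Y ⊆ univ.erase s → ∀ u w, F.Adj u w → ¬(u ∈ X ∧ w ∈ Y) := by
    rintro X Y hXc hXY hXs hYs u w huw ⟨hu, hw⟩
    have hus : u ≠ s := (Finset.mem_erase.mp (hXs hu)).1
    have hws : w ≠ s := (Finset.mem_erase.mp (hYs hw)).1
    exact (Finset.disjoint_left.mp hXY (hXc hu ⟨huw, hus, hws⟩)) hw
  have hcardV : 1 ≤ Fintype.card V := by omega
  by_cases hAB : B.card ≤ A.card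
  · refine ⟨s, A, B, C, hBA.symm, hCA.symm, hBC, ?_, ?_, hm, hM, by omega, hAB⟩
    · ext x
      simp only [Finset.mem_union]
      rw [hmem_iff x]
      tauto
    · intro u w huw
      exact ⟨hedge A B hAc hBA.symm hAs hBsub u w huw,
        hedge A C hAc hCA.symm hAs hCs u w huw,
        hedge B C hBc hBC hBsub hCs u w huw⟩
  · push_neg at hAB
    refine ⟨s, B, A, C, hBA, hBC, hCA.symm, ?_, ?_, hm, hM, by omega, le_of_lt hAB⟩
    · ext x
      simp only [Finset.mem_union]
      rw [hmem_iff x]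
      tauto
    · intro u w huw
      exact ⟨hedge B A hBc hBA hBsub hAs u w huw,
        hedge B C hBc hBC hBsub hCs u w huw,
        hedge A C hAc hCA.symm hAs hCs u w huw⟩

lemma CH_sub {F : SimpleGraph V} {v : V} {D : Finset V} (hpair : IsPair F v D)
    {X : Finset V} (hX : X ∈ (D.erase v).image (cmp F v)) : X ⊆ D.erase v := by
  obtain ⟨w, hw, rfl⟩ := Finset.mem_image.mp hX
  exact cmp_subset_of_pair hpair hw

lemma CH_ne {F : SimpleGraph V} {v : V} {D : Finset V}
    {X : Finset V} (hX : X ∈ (D.erase v).image (cmp F v)) : X.Nonempty := by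
  obtain ⟨w, hw, rfl⟩ := Finset.mem_image.mp hX
  exact ⟨w, self_mem_cmp⟩

lemma CH_closed {F : SimpleGraph V} {v : V} {D : Finset V}
    {X : Finset V} (hX : X ∈ (D.erase v).image (cmp F v)) : Closed F v X := by
  obtain ⟨w, hw, rfl⟩ := Finset.mem_image.mp hX
  exact fun a ha b hab => cmp_closed ha hab

lemma CH_disj {F : SimpleGraph V} {v : V} {D : Finset V}
    {X Y : Finset V} (hX : X ∈ (D.erase v).image (cmp F v))
    (hY : Y ∈ (D.erase v).image (cmp F v)) (hne : X ≠ Y) : Disjoint X Y := by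
  obtain ⟨w, hw, rfl⟩ := Finset.mem_image.mp hX
  obtain ⟨w2, hw2, rfl⟩ := Finset.mem_image.mp hY
  exact cmp_disj hne

lemma CH_cover {F : SimpleGraph V} {v : V} {D : Finset V} (hpair : IsPair F v D) :
    ((D.erase v).image (cmp F v)).biUnion id = D.erase v := by
  apply Finset.Subset.antisymm
  · exact Finset.biUnion_subset.mpr (fun X hX => CH_sub hpair hX)
  · intro w hw
    exact Finset.mem_biUnion.mpr ⟨cmp F v w, Finset.mem_image_of_mem _ hw, self_mem_cmp⟩

lemma CH_sum {F : SimpleGraph V} {v : V} {D : Finset V} (hpair : IsPair F v D) :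
    ∑ X ∈ (D.erase v).image (cmp F v), X.card = (D.erase v).card := by
  have h1 := Finset.card_biUnion
    (s := (D.erase v).image (cmp F v)) (t := id)
    (fun X hX Y hY h => CH_disj hX hY h)
  rw [CH_cover hpair] at h1
  exact h1.symm

end SepLemma

open SepLemma in
theorem stmt_5 {V : Type} [Fintype V] [DecidableEq V]
    (F : SimpleGraph V) (hF : F.IsAcyclic) (m M : ℕ)
    (hmM : 2 * m ≤ M) (hcard : M + 1 ≤ Fintype.card V) :
    ∃ (s : V) (F1 F2 F3 : Finset V),
      Disjoint F1 F2 ∧ Disjoint F1 F3 ∧ Disjoint F2 F3 ∧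
      F1 ∪ F2 ∪ F3 = Finset.univ.erase s ∧
      (∀ u v : V, F.Adj u v →
        ¬(u ∈ F1 ∧ v ∈ F2) ∧ ¬(u ∈ F1 ∧ v ∈ F3) ∧ ¬(u ∈ F2 ∧ v ∈ F3)) ∧
      m ≤ F3.card ∧ F3.card ≤ M ∧
      F1.card ≤ Fintype.card V - 1 - M ∧
      F2.card ≤ F1.card := by
  classical
  set n := Fintype.card V with hn
  have hVne : Nonempty V := Fintype.card_pos_iff.mp (by omega)
  obtain ⟨v₀⟩ := hVne
  obtain ⟨v, D, hpair, -, hDc, hsm⟩ :=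
    exists_minpair hF (n - M) v₀ univ (pair_univ F v₀) (by rw [Finset.card_univ]; omega)
  set CH := (D.erase v).image (cmp F v) with hCH
  have hvD := hpair.1
  have hDn : D.card ≤ n := by rw [hn]; exact Finset.card_le_univ D
  have hDe : (D.erase v).card = D.card - 1 := Finset.card_erase_of_mem hvD
  have hD1 : 1 ≤ D.card := Finset.card_pos.mpr ⟨v, hvD⟩
  set O := (univ : Finset V) \ D with hO
  have hOcard : O.card = n - D.card := by
    rw [hO, Finset.card_sdiff_of_subset (Finset.subset_univ D), Finset.card_univ]
  have hOM : O.card ≤ M := by omega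
  have hsum : ∑ X ∈ CH, X.card = (D.erase v).card := CH_sum hpair
  obtain ⟨T, hTsub, hTcap, hTmax⟩ := exists_maxsub CH (M - O.card) (fun X hX => CH_ne hX)
  set CT := T.biUnion id with hCT
  have hCTsub : CT ⊆ D.erase v :=
    Finset.biUnion_subset.mpr (fun X hX => CH_sub hpair (hTsub hX))
  have hCTcard : CT.card = ∑ X ∈ T, X.card :=
    Finset.card_biUnion (fun X hX Y hY hne => CH_disj (hTsub hX) (hTsub hY) hne)
  set C := O ∪ CT with hC
  have hOCT : Disjoint O CT := by
    rw [Finset.disjoint_left]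
    intro x hx hx2
    exact (Finset.mem_sdiff.mp hx).2 (Finset.mem_of_mem_erase (hCTsub hx2))
  have hCcard : C.card = O.card + ∑ X ∈ T, X.card := by
    rw [hC, Finset.card_union_of_disjoint hOCT, hCTcard]
  have hCM : C.card ≤ M := by omega
  have hCsub : C ⊆ univ.erase v := by
    intro x hx
    rcases Finset.mem_union.mp hx with h | h
    · exact Finset.mem_erase.mpr
        ⟨fun he => (Finset.mem_sdiff.mp h).2 (he ▸ hvD), Finset.mem_univ x⟩
    · exact Finset.mem_erase.mpr ⟨(Finset.mem_erase.mp (hCTsub h)).1, Finset.mem_univ x⟩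
  have hCclosed : Closed F v C := by
    intro a ha b hab
    rcases Finset.mem_union.mp ha with h | h
    · exact Finset.mem_union_left _ (Finset.mem_sdiff.mpr
        ⟨Finset.mem_univ b, closed_outside hpair (Finset.mem_sdiff.mp h).2 hab⟩)
    · obtain ⟨X, hXT, haX⟩ := Finset.mem_biUnion.mp h
      exact Finset.mem_union_right _
        (Finset.mem_biUnion.mpr ⟨X, hXT, CH_closed (hTsub hXT) haX hab⟩)
  have hkey : ∀ X ∈ CH, X ∉ T → M < C.card + X.card := by
    intro X hX hXT
    have := hTmax X hX hXT
    omega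
  have hsmX : ∀ X ∈ CH, X.card + M + 1 ≤ n := by
    intro X hX
    obtain ⟨w, hw, hwX⟩ := Finset.mem_image.mp hX
    have h1 := hsm w hw
    rw [hwX] at h1
    omega
  by_cases hcm : m ≤ C.card
  · by_cases hex : ∃ X ∈ CH, X ∉ T
    · obtain ⟨A, hACH, hAT⟩ := hex
      have hAsub : A ⊆ D.erase v := CH_sub hpair hACH
      have hAsub' : A ⊆ univ.erase v :=
        hAsub.trans (Finset.erase_subset_erase v (Finset.subset_univ D))
      have hCA : Disjoint C A := by
        rw [hC, Finset.disjoint_union_left]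
        constructor
        · rw [Finset.disjoint_left]
          intro x hx hx2
          exact (Finset.mem_sdiff.mp hx).2 (Finset.mem_of_mem_erase (hAsub hx2))
        · rw [hCT, Finset.disjoint_biUnion_left]
          intro X hXT
          exact CH_disj (hTsub hXT) hACH (fun h => hAT (h ▸ hXT))
      have hBc := card_B (s := v) hCsub hAsub' hCA
      have hkA := hkey A hACH hAT
      exact assemble hcard v C A hCclosed (CH_closed hACH) hCsub hAsub' hCA hcm hCM
        (hsmX A hACH) (by omega)
    · push_neg at hex
      have hTeq : T = CH := Finset.Subset.antisymm hTsub hex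
      have hsumT : ∑ X ∈ T, X.card = D.card - 1 := by rw [hTeq, hsum, hDe]
      have hCbig : C.card = n - 1 := by omega
      have hBc := card_B (s := v) hCsub (Finset.empty_subset _) (Finset.disjoint_empty_right _)
      exact assemble hcard v C ∅ hCclosed
        (by intro a ha; exact absurd ha (Finset.notMem_empty a)) hCsub
        (Finset.empty_subset _) (Finset.disjoint_empty_right _) hcm hCM
        (by simp; omega) (by omega)
  · push_neg at hcm
    have hex : ∃ X ∈ CH, X ∉ T := by
      by_contra hex
      push_neg at hex
      have hTeq : T = CH := Finset.Subset.antisymm hTsub hex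
      have hsumT : ∑ X ∈ T, X.card = D.card - 1 := by rw [hTeq, hsum, hDe]
      omega
    obtain ⟨X₀, hX₀CH, hX₀T⟩ := hex
    have hUne : (CH \ T).Nonempty := ⟨X₀, Finset.mem_sdiff.mpr ⟨hX₀CH, hX₀T⟩⟩
    obtain ⟨Z, hZmem, hZmin⟩ := Finset.exists_min_image (CH \ T) Finset.card hUne
    have hZCH : Z ∈ CH := (Finset.mem_sdiff.mp hZmem).1
    have hZT : Z ∉ T := (Finset.mem_sdiff.mp hZmem).2
    have hZkey : M < C.card + Z.card := hkey Z hZCH hZT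
    have hZn : Z.card + M + 1 ≤ n := hsmX Z hZCH
    by_cases hZM : Z.card ≤ M
    · have hex2 : ∃ t ∈ CH \ T, t ≠ Z := by
        by_contra h2
        push_neg at h2
        have hsing : CH \ T = {Z} := by
          apply Finset.Subset.antisymm
          · intro t ht
            exact Finset.mem_singleton.mpr (h2 t ht)
          · intro t ht
            rw [Finset.mem_singleton.mp ht]
            exact hZmem
        have hsd := Finset.sum_sdiff (f := Finset.card) hTsub
        rw [hsing, Finset.sum_singleton, hsum, hDe] at hsd
        omega
      obtain ⟨t, htmem, htZ⟩ := hex2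
      have htCH : t ∈ CH := (Finset.mem_sdiff.mp htmem).1
      have htkey := hkey t htCH (Finset.mem_sdiff.mp htmem).2
      have hZt : Z.card ≤ t.card := hZmin t htmem
      have hdisjZt : Disjoint Z t := CH_disj hZCH htCH (fun h => htZ h.symm)
      have hZsub : Z ⊆ univ.erase v :=
        (CH_sub hpair hZCH).trans (Finset.erase_subset_erase v (Finset.subset_univ D))
      have htsub : t ⊆ univ.erase v :=
        (CH_sub hpair htCH).trans (Finset.erase_subset_erase v (Finset.subset_univ D))
      have hBc := card_B (s := v) hZsub htsub hdisjZt
      have htn := hsmX t htCH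
      exact assemble hcard v Z t (CH_closed hZCH) (CH_closed htCH) hZsub htsub hdisjZt
        (by omega) hZM htn (by omega)
    · push_neg at hZM
      obtain ⟨wz, hwz, hZeq⟩ := Finset.mem_image.mp hZCH
      obtain ⟨w', hw'Z, hpair'⟩ := pair_of_cmp hF hpair hwz
      rw [hZeq] at hpair'
      obtain ⟨v', D', hpair2, hD'sub, hD'c, hsm'⟩ :=
        exists_minpair hF (M + 1) w' Z hpair' (by omega)
      have hv'D' := hpair2.1
      have hD'Z : D'.card ≤ Z.card := Finset.card_le_card hD'sub
      have hD'e : (D'.erase v').card = D'.card - 1 := Finset.card_erase_of_mem hv'D'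
      set O' := (univ : Finset V) \ D' with hO'
      have hO'card : O'.card = n - D'.card := by
        rw [hO', Finset.card_sdiff_of_subset (Finset.subset_univ D'), Finset.card_univ]
      have hO'closed : Closed F v' O' := by
        intro a ha b hab
        exact Finset.mem_sdiff.mpr
          ⟨Finset.mem_univ b, closed_outside hpair2 (Finset.mem_sdiff.mp ha).2 hab⟩
      have hO'sub : O' ⊆ univ.erase v' := by
        intro x hx
        exact Finset.mem_erase.mpr
          ⟨fun he => (Finset.mem_sdiff.mp hx).2 (he ▸ hv'D'), Finset.mem_univ x⟩
      have hD'n : D'.card ≤ n := by rw [hn]; exact Finset.card_le_univ D'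
      have hO'n : O'.card + M + 1 ≤ n := by omega
      set CH' := (D'.erase v').image (cmp F v') with hCH'
      have hsum' : ∑ X ∈ CH', X.card = (D'.erase v').card := CH_sum hpair2
      obtain ⟨T', hT'sub, hT'cap, hT'max⟩ := exists_maxsub CH' M (fun X hX => CH_ne hX)
      set C' := T'.biUnion id with hC'
      have hC'sub : C' ⊆ D'.erase v' :=
        Finset.biUnion_subset.mpr (fun X hX => CH_sub hpair2 (hT'sub hX))
      have hC'sub' : C' ⊆ univ.erase v' :=
        hC'sub.trans (Finset.erase_subset_erase v' (Finset.subset_univ D'))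
      have hC'card : C'.card = ∑ X ∈ T', X.card :=
        Finset.card_biUnion (fun X hX Y hY hne => CH_disj (hT'sub hX) (hT'sub hY) hne)
      have hC'closed : Closed F v' C' := by
        intro a ha b hab
        obtain ⟨X, hXT, haX⟩ := Finset.mem_biUnion.mp ha
        exact Finset.mem_biUnion.mpr ⟨X, hXT, CH_closed (hT'sub hXT) haX hab⟩
      have hD'1 : 1 ≤ D'.card := by omega
      by_cases hc'm : m ≤ C'.card
      · have hdisj' : Disjoint C' O' := by
          rw [Finset.disjoint_left]
          intro x hx hx2
          exact (Finset.mem_sdiff.mp hx2).2 (Finset.mem_of_mem_erase (hC'sub hx))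
        have hBc := card_B (s := v') hC'sub' hO'sub hdisj'
        exact assemble hcard v' C' O' hC'closed hO'closed hC'sub' hO'sub hdisj' hc'm
          (by omega) hO'n (by omega)
      · push_neg at hc'm
        have hex' : ∃ X ∈ CH', X ∉ T' := by
          by_contra h2
          push_neg at h2
          have hT'eq : T' = CH' := Finset.Subset.antisymm hT'sub h2
          rw [hT'eq, hsum', hD'e] at hC'card
          omega
        obtain ⟨Z', hZ'CH, hZ'T⟩ := hex'
        have hZ'key := hT'max Z' hZ'CH hZ'T
        have hZ'M : Z'.card ≤ M := by
          obtain ⟨w2, hw2, hw2e⟩ := Finset.mem_image.mp hZ'CH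
          have h1 := hsm' w2 hw2
          rw [hw2e] at h1
          omega
        have hZ'sub : Z' ⊆ D'.erase v' := CH_sub hpair2 hZ'CH
        have hZ'sub' : Z' ⊆ univ.erase v' :=
          hZ'sub.trans (Finset.erase_subset_erase v' (Finset.subset_univ D'))
        have hZ'card : Z'.card ≤ (D'.erase v').card := Finset.card_le_card hZ'sub
        have hdisj'' : Disjoint Z' O' := by
          rw [Finset.disjoint_left]
          intro x hx hx2
          exact (Finset.mem_sdiff.mp hx2).2 (Finset.mem_of_mem_erase (hZ'sub hx))
        have hBc := card_B (s := v') hZ'sub' hO'sub hdisj''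
        exact assemble hcard v' Z' O' (CH_closed hZ'CH) hO'closed hZ'sub' hO'sub hdisj''
          (by omega) hZ'M hO'n (by omega)
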